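/- Let g : [a,b] → ℝⁿ (a < b) be continuous and differentiable except at finitely many points, and suppose the relative interior of the convex hull of {g'(t) : t ∈ [a,b], g differentiable at t} does not contain 0. Then there exists w ∈ ℝⁿ with ⟨w, g(a)⟩ < ⟨w, g(b)⟩; in particular g(a) ≠ g(b). -/

import Mathlib

open Set InnerProductSpace Filter

local notation "⟪" x ", " y "⟫" => @inner ℝ _ _ x y


lemma interior_pre_iff {α : Type*} [TopologicalSpace α] (S : Set α) (C : Set α) (y : S) :
    y ∈ interior ((Subtype.val) ⁻¹' C : Set S) ↔ ∃ U ∈ nhds (y : α), U ∩ S ⊆ C := by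
  rw [mem_interior_iff_mem_nhds, nhds_subtype, Filter.mem_comap]
  constructor
  · rintro ⟨U, hU, hsub⟩
    exact ⟨U, hU, fun z hz => hsub (show (⟨z, hz.2⟩ : S) ∈ _ from hz.1)⟩
  · rintro ⟨U, hU, hsub⟩
    exact ⟨U, hU, fun z hz => hsub ⟨hz, z.2⟩⟩

lemma sep_aux {n : ℕ} (C : Set (EuclideanSpace ℝ (Fin n))) (hC : Convex ℝ C)
    (hne : C.Nonempty) (h0 : (0 : EuclideanSpace ℝ (Fin n)) ∉ intrinsicInterior ℝ C) :
    ∃ w : EuclideanSpace ℝ (Fin n), (∀ x ∈ C, 0 ≤ ⟪w, x⟫) ∧ ∃ x ∈ C, 0 < ⟪w, x⟫ := by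
  set A := affineSpan ℝ C with hAdef
  have hCA : C ⊆ (A : Set (EuclideanSpace ℝ (Fin n))) := subset_affineSpan ℝ C
  by_cases hA : (0 : EuclideanSpace ℝ (Fin n)) ∈ (A : Set (EuclideanSpace ℝ (Fin n)))
  · -- 0 in the affine span; use supporting hyperplane in the direction submodule
    set V := A.direction with hVdef
    have hAV : (A : Set (EuclideanSpace ℝ (Fin n))) = (V : Set (EuclideanSpace ℝ (Fin n))) := by
      ext x
      constructor
      · intro hx
        have := AffineSubspace.vsub_mem_direction hx hA
        simpa using this
      · intro hx
        have := AffineSubspace.vadd_mem_of_mem_direction (hVdef ▸ hx) hA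
        simpa using this
    have h0V : (0 : EuclideanSpace ℝ (Fin n)) ∈ (V : Set (EuclideanSpace ℝ (Fin n))) := by
      rw [← hAV]; exact hA
    set D : Set V := (Subtype.val) ⁻¹' C with hDdef
    have hD : Convex ℝ D := hC.linear_preimage V.subtype
    have hmemV : ∀ y : V, y ∈ interior D ↔
        ∃ U ∈ nhds (y : EuclideanSpace ℝ (Fin n)), U ∩ (V : Set (EuclideanSpace ℝ (Fin n))) ⊆ C :=
      fun y => interior_pre_iff (V : Set (EuclideanSpace ℝ (Fin n))) C y
    have hmemA : ∀ y : A, y ∈ interior ((Subtype.val) ⁻¹' C : Set A) ↔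
        ∃ U ∈ nhds (y : EuclideanSpace ℝ (Fin n)),
          U ∩ (V : Set (EuclideanSpace ℝ (Fin n))) ⊆ C := by
      intro y
      rw [← hAV]
      exact interior_pre_iff (A : Set (EuclideanSpace ℝ (Fin n))) C y
    have h0D : (0 : V) ∉ interior D := by
      intro h
      apply h0
      rw [mem_intrinsicInterior]
      refine ⟨⟨0, hA⟩, ?_, rfl⟩
      rw [hmemA]
      exact (hmemV 0).1 h
    obtain ⟨x₁, hx₁⟩ := hne.intrinsicInterior hC
    have hx₁C : x₁ ∈ C := intrinsicInterior_subset hx₁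
    have hx₁V : x₁ ∈ (V : Set (EuclideanSpace ℝ (Fin n))) := by rw [← hAV]; exact hCA hx₁C
    have hv₁ : (⟨x₁, hx₁V⟩ : V) ∈ interior D := by
      rw [hmemV]
      rw [mem_intrinsicInterior] at hx₁
      obtain ⟨y, hy, hyx⟩ := hx₁
      rw [hmemA] at hy
      show ∃ U ∈ nhds x₁, U ∩ (V : Set (EuclideanSpace ℝ (Fin n))) ⊆ C
      rw [← hyx]
      exact hy
    obtain ⟨f, hf⟩ := geometric_hahn_banach_open_point hD.interior isOpen_interior h0D
    have hf0 : ∀ y ∈ interior D, f y < 0 := by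
      intro y hy; simpa using hf y hy
    have hfD : ∀ y ∈ D, f y ≤ 0 := by
      intro y hy
      by_contra hpos
      push_neg at hpos
      set v₁ : V := ⟨x₁, hx₁V⟩
      have hfv : f v₁ < 0 := hf0 _ hv₁
      set t : ℝ := f y / (f y - f v₁) with ht
      have hden : 0 < f y - f v₁ := by linarith
      have ht0 : 0 < t := div_pos hpos hden
      have ht1 : t < 1 := (div_lt_one hden).2 (by linarith)
      have hmem : (1 - t) • y + t • v₁ ∈ openSegment ℝ y v₁ :=
        ⟨1 - t, t, by linarith, ht0, by ring, rfl⟩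
      have hint : (1 - t) • y + t • v₁ ∈ interior D :=
        hD.openSegment_self_interior_subset_interior hy hv₁ hmem
      have hlt := hf0 _ hint
      rw [map_add, map_smul, map_smul] at hlt
      simp only [smul_eq_mul] at hlt
      have hzero : (1 - t) * f y + t * f v₁ = 0 := by
        field_simp [ht]
        have hmul : t * (f y - f v₁) = f y := by rw [ht]; exact div_mul_cancel₀ _ hden.ne'
        linear_combination -hmul
      linarith
    have : CompleteSpace V := FiniteDimensional.complete ℝ V
    set v : V := (toDual ℝ V).symm (-f) with hv
    refine ⟨(v : EuclideanSpace ℝ (Fin n)), ?_, ?_⟩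
    · intro x hx
      have hxV : x ∈ (V : Set (EuclideanSpace ℝ (Fin n))) := by rw [← hAV]; exact hCA hx
      have hh : ⟪v, (⟨x, hxV⟩ : V)⟫ = (-f) ⟨x, hxV⟩ := toDual_symm_apply
      rw [Submodule.coe_inner] at hh
      rw [hh]
      simp only [ContinuousLinearMap.neg_apply, neg_nonneg]
      exact hfD _ hx
    · refine ⟨x₁, hx₁C, ?_⟩
      have hh : ⟪v, (⟨x₁, hx₁V⟩ : V)⟫ = (-f) ⟨x₁, hx₁V⟩ := toDual_symm_apply
      rw [Submodule.coe_inner] at hh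
      rw [hh]
      simp only [ContinuousLinearMap.neg_apply, neg_pos]
      exact hf0 _ hv₁
  · have hclosed : IsClosed (A : Set (EuclideanSpace ℝ (Fin n))) := A.closed_of_finiteDimensional
    obtain ⟨f, u, hfu, hf⟩ := geometric_hahn_banach_point_closed A.convex hclosed hA
    have hu : 0 < u := by simpa using hfu
    set w : EuclideanSpace ℝ (Fin n) := (toDual ℝ (EuclideanSpace ℝ (Fin n))).symm f with hw
    have hwx : ∀ x : EuclideanSpace ℝ (Fin n), ⟪w, x⟫ = f x := fun x => toDual_symm_apply
    obtain ⟨x₀, hx₀⟩ := hne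
    exact ⟨w, fun x hx => by rw [hwx]; exact (hu.trans (hf x (hCA hx))).le,
      x₀, hx₀, by rw [hwx]; exact hu.trans (hf x₀ (hCA hx₀))⟩


lemma mono_aux (F : Set ℝ) (hF : F.Finite) :
    ∀ (a b : ℝ) (f f' : ℝ → ℝ), ContinuousOn f (Icc a b) →
    (∀ t ∈ Ioo a b \ F, HasDerivWithinAt f (f' t) (Ioo a b) t ∧ 0 ≤ f' t) →
    MonotoneOn f (Icc a b) := by
  refine Set.Finite.induction_on (motive := fun F _ => ∀ (a b : ℝ) (f f' : ℝ → ℝ), ContinuousOn f (Icc a b) →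
      (∀ t ∈ Ioo a b \ F, HasDerivWithinAt f (f' t) (Ioo a b) t ∧ 0 ≤ f' t) →
      MonotoneOn f (Icc a b)) F hF ?_ ?_
  · 
    intro a b f f' hc hd
    refine monotoneOn_of_hasDerivWithinAt_nonneg (f' := f') (convex_Icc a b) hc
      (fun x hx => ?_) (fun x hx => ?_)
    · rw [interior_Icc] at hx
      exact ((hd x ⟨hx, notMem_empty x⟩).1).mono (by rw [interior_Icc])
    · rw [interior_Icc] at hx
      exact (hd x ⟨hx, notMem_empty x⟩).2
  · intro c s hc hsF IH a b f f' hcont hd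
    by_cases hcab : c ∈ Ioo a b
    · have h1 : MonotoneOn f (Icc a c) := by
        refine IH a c f f' (hcont.mono (Icc_subset_Icc le_rfl hcab.2.le)) ?_
        intro t ht
        have ht' : t ∈ Ioo a b \ insert c s :=
          ⟨⟨ht.1.1, ht.1.2.trans hcab.2⟩, by
            simp only [mem_insert_iff, not_or]
            exact ⟨ne_of_lt ht.1.2, ht.2⟩⟩
        exact ⟨(hd t ht').1.mono (Ioo_subset_Ioo le_rfl hcab.2.le), (hd t ht').2⟩
      have h2 : MonotoneOn f (Icc c b) := by
        refine IH c b f f' (hcont.mono (Icc_subset_Icc hcab.1.le le_rfl)) ?_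
        intro t ht
        have ht' : t ∈ Ioo a b \ insert c s :=
          ⟨⟨hcab.1.trans ht.1.1, ht.1.2⟩, by
            simp only [mem_insert_iff, not_or]
            exact ⟨(ne_of_gt ht.1.1), ht.2⟩⟩
        exact ⟨(hd t ht').1.mono (Ioo_subset_Ioo hcab.1.le le_rfl), (hd t ht').2⟩
      intro x hx y hy hxy
      rcases le_total y c with h | h
      · exact h1 ⟨hx.1, hxy.trans h⟩ ⟨hy.1, h⟩ hxy
      rcases le_total c x with h' | h'
      · exact h2 ⟨h', hx.2⟩ ⟨h, hy.2⟩ hxy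
      · exact (h1 ⟨hx.1, h'⟩ ⟨hcab.1.le, le_rfl⟩ h').trans
          (h2 ⟨le_rfl, hcab.2.le⟩ ⟨h, hy.2⟩ h)
    · refine IH a b f f' hcont (fun t ht => ?_)
      have : t ∈ Ioo a b \ insert c s := ⟨ht.1, by
        simp only [mem_insert_iff, not_or]
        exact ⟨fun h => hcab (h ▸ ht.1), ht.2⟩⟩
      exact hd t this


/-- Key lemma: if 0 is not in the relative interior of the convex hull of the
derivatives of g, then some linear functional strictly separates g(a), g(b). -/
theorem stmt15 (n : ℕ) (a b : ℝ) (hab : a < b)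
    (g g' : ℝ → EuclideanSpace ℝ (Fin n)) (F : Set ℝ) (hF : F.Finite)
    (hg : ContinuousOn g (Set.Icc a b))
    (hg' : ∀ t ∈ Set.Icc a b \ F, HasDerivWithinAt g (g' t) (Set.Icc a b) t)
    (h0 : (0 : EuclideanSpace ℝ (Fin n)) ∉
      intrinsicInterior ℝ (convexHull ℝ (g' '' (Set.Icc a b \ F)))) :
    ∃ w : EuclideanSpace ℝ (Fin n),
      (inner ℝ w (g a) : ℝ) < (inner ℝ w (g b) : ℝ) := by
  set S := g' '' (Set.Icc a b \ F) with hSdef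
  have hSne : S.Nonempty := ((Icc_infinite hab).diff hF).nonempty.image g'
  have hCne : (convexHull ℝ S).Nonempty := hSne.mono (subset_convexHull ℝ S)
  obtain ⟨w, hw1, x₀, hx₀C, hx₀pos⟩ := sep_aux _ (convex_convexHull ℝ S) hCne h0
  -- a point with strictly positive derivative pairing
  have hlin : IsLinearMap ℝ (fun x : EuclideanSpace ℝ (Fin n) => ⟪w, x⟫) :=
    ⟨fun x y => inner_add_right w x y, fun c x => real_inner_smul_right w x c⟩
  have hex : ∃ t₀ ∈ Set.Icc a b \ F, 0 < ⟪w, g' t₀⟫ := by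
    by_contra h
    push_neg at h
    have hsub : convexHull ℝ S ⊆ {x | ⟪w, x⟫ ≤ 0} := by
      apply convexHull_min
      · rintro x ⟨t, ht, rfl⟩
        exact h t ht
      · exact convex_halfSpace_le hlin 0
    exact absurd (hsub hx₀C) (not_le.2 hx₀pos)
  obtain ⟨t₀, ht₀, ht₀pos⟩ := hex
  set φ : ℝ → ℝ := fun t => ⟪w, g t⟫ with hφdef
  have hφc : ContinuousOn φ (Set.Icc a b) := (innerSL ℝ w).continuous.comp_continuousOn hg
  have hφd : ∀ t ∈ Set.Icc a b \ F, HasDerivWithinAt φ ⟪w, g' t⟫ (Set.Icc a b) t := by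
    intro t ht
    exact (innerSL ℝ w).hasFDerivAt.comp_hasDerivWithinAt t (hg' t ht)
  have hmono : MonotoneOn φ (Set.Icc a b) := by
    refine mono_aux F hF a b φ (fun t => ⟪w, g' t⟫) hφc (fun t ht => ?_)
    have ht' : t ∈ Set.Icc a b \ F := ⟨Ioo_subset_Icc_self ht.1, ht.2⟩
    exact ⟨(hφd t ht').mono Ioo_subset_Icc_self,
      hw1 _ (subset_convexHull ℝ S (mem_image_of_mem g' ht'))⟩
  -- slope argument near t₀
  have hslope := hasDerivWithinAt_iff_tendsto_slope.1 (hφd t₀ ht₀)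
  have hev : ∀ᶠ s in nhdsWithin t₀ (Set.Icc a b \ {t₀}), 0 < slope φ t₀ s :=
    hslope (Ioi_mem_nhds ht₀pos)
  have hat₀ : a ≤ t₀ := ht₀.1.1
  have ht₀b : t₀ ≤ b := ht₀.1.2
  rcases lt_or_eq_of_le ht₀b with hlt | heq
  · -- t₀ < b : find s > t₀ with φ t₀ < φ s
    have hsub : Set.Ioc t₀ b ⊆ Set.Icc a b \ {t₀} := fun s hs =>
      ⟨⟨hat₀.trans hs.1.le, hs.2⟩, ne_of_gt hs.1⟩
    have hle : nhdsWithin t₀ (Set.Ioc t₀ b) ≤ nhdsWithin t₀ (Set.Icc a b \ {t₀}) :=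
      nhdsWithin_mono _ hsub
    have : NeBot (nhdsWithin t₀ (Set.Ioc t₀ b)) := by
      rw [nhdsWithin_Ioc_eq_nhdsGT hlt]
      infer_instance
    obtain ⟨s, hsl', hsIoc⟩ := ((hev.filter_mono hle).and self_mem_nhdsWithin).exists
    rw [slope_def_field] at hsl'
    have hs0 : 0 < s - t₀ := sub_pos.2 hsIoc.1
    have hφlt : φ t₀ < φ s := by
      have := mul_pos hsl' hs0
      rw [div_mul_cancel₀ _ (ne_of_gt hs0)] at this
      linarith
    refine ⟨w, ?_⟩
    calc ⟪w, g a⟫ = φ a := rfl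
      _ ≤ φ t₀ := hmono ⟨le_rfl, hab.le⟩ ht₀.1 hat₀
      _ < φ s := hφlt
      _ ≤ φ b := hmono ⟨hat₀.trans hsIoc.1.le, hsIoc.2⟩ ⟨hab.le, le_rfl⟩ hsIoc.2
  · -- t₀ = b : find s < t₀ with φ s < φ t₀
    have hat₀' : a < t₀ := heq ▸ hab
    have hsub : Set.Ico a t₀ ⊆ Set.Icc a b \ {t₀} := fun s hs =>
      ⟨⟨hs.1, hs.2.le.trans ht₀b⟩, ne_of_lt hs.2⟩
    have hle : nhdsWithin t₀ (Set.Ico a t₀) ≤ nhdsWithin t₀ (Set.Icc a b \ {t₀}) :=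
      nhdsWithin_mono _ hsub
    have : NeBot (nhdsWithin t₀ (Set.Ico a t₀)) := by
      rw [nhdsWithin_Ico_eq_nhdsLT hat₀']
      infer_instance
    obtain ⟨s, hsl', hsIco⟩ := ((hev.filter_mono hle).and self_mem_nhdsWithin).exists
    rw [slope_def_field] at hsl'
    have hs0 : s - t₀ < 0 := sub_neg.2 hsIco.2
    have hφlt : φ s < φ t₀ := by
      have := mul_neg_of_pos_of_neg hsl' hs0
      rw [div_mul_cancel₀ _ (ne_of_lt hs0)] at this
      linarith
    refine ⟨w, ?_⟩
    calc ⟪w, g a⟫ = φ a := rfl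
      _ ≤ φ s := hmono ⟨le_rfl, hab.le⟩ ⟨hsIco.1, hsIco.2.le.trans ht₀b⟩ hsIco.1
      _ < φ t₀ := hφlt
      _ ≤ φ b := hmono ht₀.1 ⟨hab.le, le_rfl⟩ ht₀b
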